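/- Let E be a normed space over K = k(t), r ∈ ℝ, and V_r = E_{≤r}/E_{<r} (a k-vector space). Let B be a basis of E whose vectors all have norm congruent to r mod ℤ, say ‖b‖ = r - m_b with m_b ∈ ℤ. Then B is reduced if and only if the elements red_r(t^{m_b} b), b ∈ B, are k-linearly independent in V_r; and in that case they form a k-basis of V_r. -/

import Mathlib

open scoped Classical in
/-- The degree function `|·| = -v_∞` on `K = k(t)`, with `|0| = -∞`. -/
noncomputable def degK {k : Type*} [Field k] (a : RatFunc k) : WithBot ℝ :=
  if a = 0 then ⊥ else ((a.intDegree : ℝ) : WithBot ℝ)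


section aux
open RatFunc Polynomial
variable {k : Type*} [Field k]

theorem myIntDegree_inv {x : RatFunc k} (hx : x ≠ 0) : (x⁻¹).intDegree = -x.intDegree := by
  have h := RatFunc.intDegree_mul hx (inv_ne_zero hx)
  rw [mul_inv_cancel₀ hx, RatFunc.intDegree_one] at h
  omega

theorem myIntDegree_pow (x : RatFunc k) (hx : x ≠ 0) (n : ℕ) :
    (x ^ n).intDegree = n * x.intDegree := by
  induction n with
  | zero => simp
  | succ n ih =>
    rw [pow_succ, RatFunc.intDegree_mul (pow_ne_zero _ hx) hx, ih]
    push_cast; ring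

theorem myIntDegree_zpow (x : RatFunc k) (hx : x ≠ 0) (z : ℤ) :
    (x ^ z).intDegree = z * x.intDegree := by
  cases z with
  | ofNat n =>
      rw [Int.ofNat_eq_coe, zpow_natCast, myIntDegree_pow x hx]
  | negSucc n =>
      rw [zpow_negSucc, myIntDegree_inv (pow_ne_zero _ hx), myIntDegree_pow x hx,
        Int.negSucc_eq]
      push_cast; ring

theorem lead0 {u : RatFunc k} (hu : u ≠ 0) (h0 : u.intDegree = 0) :
    u - RatFunc.C (u.num.leadingCoeff / u.denom.leadingCoeff) = 0 ∨
      (u - RatFunc.C (u.num.leadingCoeff / u.denom.leadingCoeff)).intDegree < 0 := by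
  have hpne : u.num ≠ 0 := RatFunc.num_ne_zero hu
  have hqne : u.denom ≠ 0 := u.denom_ne_zero
  have hdeg : u.num.natDegree = u.denom.natDegree := by
    rw [RatFunc.intDegree] at h0; omega
  set c := u.num.leadingCoeff / u.denom.leadingCoeff with hc
  have hcne : c ≠ 0 := div_ne_zero (Polynomial.leadingCoeff_ne_zero.mpr hpne)
    (Polynomial.leadingCoeff_ne_zero.mpr hqne)
  have key : u - RatFunc.C c =
      algebraMap k[X] (RatFunc k) (u.num - Polynomial.C c * u.denom) /
        algebraMap k[X] (RatFunc k) u.denom := by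
    rw [map_sub, map_mul, sub_div, RatFunc.num_div_denom, mul_div_assoc,
      div_self (by simpa using hqne), mul_one, RatFunc.algebraMap_C]
  by_cases hz : u.num - Polynomial.C c * u.denom = 0
  · left; rw [key, hz]; simp
  · right
    have h1 : u.num.degree = (Polynomial.C c * u.denom).degree := by
      rw [Polynomial.degree_C_mul hcne, Polynomial.degree_eq_natDegree hpne,
        Polynomial.degree_eq_natDegree hqne, hdeg]
    have h2 : u.num.leadingCoeff = (Polynomial.C c * u.denom).leadingCoeff := by
      rw [Polynomial.leadingCoeff_mul, Polynomial.leadingCoeff_C, hc,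
        div_mul_cancel₀ _ (Polynomial.leadingCoeff_ne_zero.mpr hqne)]
    have hdlt : (u.num - Polynomial.C c * u.denom).degree < u.denom.degree := by
      calc (u.num - Polynomial.C c * u.denom).degree < u.num.degree :=
            Polynomial.degree_sub_lt h1 hpne h2
        _ = u.denom.degree := by
            rw [Polynomial.degree_eq_natDegree hpne, Polynomial.degree_eq_natDegree hqne, hdeg]
    have hnlt : (u.num - Polynomial.C c * u.denom).natDegree < u.denom.natDegree :=
      Polynomial.natDegree_lt_natDegree hz hdlt
    have hdiv : (u - RatFunc.C c).intDegree =
        (u.num - Polynomial.C c * u.denom).natDegree - (u.denom.natDegree : ℤ) := by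
      have hz' : algebraMap k[X] (RatFunc k) (u.num - Polynomial.C c * u.denom) ≠ 0 := by
        rw [ne_eq, map_eq_zero_iff _ (IsFractionRing.injective k[X] (RatFunc k))]
        exact hz
      rw [key, div_eq_mul_inv, RatFunc.intDegree_mul hz'
          (inv_ne_zero (by simpa using hqne)),
        myIntDegree_inv (by simpa using hqne), RatFunc.intDegree_polynomial,
        RatFunc.intDegree_polynomial]
      ring
    omega


theorem degK_zero : degK (0 : RatFunc k) = ⊥ := if_pos rfl

theorem degK_eq {a : RatFunc k} (h : a ≠ 0) : degK a = ((a.intDegree : ℝ) : WithBot ℝ) :=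
  if_neg h

theorem degK_mul (x y : RatFunc k) : degK (x * y) = degK x + degK y := by
  by_cases hx : x = 0
  · simp [hx, degK_zero]
  by_cases hy : y = 0
  · simp [hy, degK_zero]
  rw [degK_eq hx, degK_eq hy, degK_eq (mul_ne_zero hx hy), RatFunc.intDegree_mul hx hy,
    ← WithBot.coe_add]
  push_cast
  rfl

theorem tX_ne_zero : (algebraMap (Polynomial k) (RatFunc k) Polynomial.X) ≠ 0 := by
  simp only [ne_eq, FaithfulSMul.algebraMap_eq_zero_iff]
  exact Polynomial.X_ne_zero

theorem degK_tpow (z : ℤ) :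
    degK ((algebraMap (Polynomial k) (RatFunc k) Polynomial.X) ^ z) =
      (((z : ℝ) : ℝ) : WithBot ℝ) := by
  rw [degK_eq (zpow_ne_zero z tX_ne_zero), myIntDegree_zpow _ tX_ne_zero,
    RatFunc.intDegree_polynomial, Polynomial.natDegree_X]
  norm_num

theorem degK_C {c : k} (h : c ≠ 0) : degK (RatFunc.C c) = ((0 : ℝ) : WithBot ℝ) := by
  rw [degK_eq (by simpa using h), RatFunc.intDegree_C]
  norm_num

-- WithBot ℝ helpers
theorem wb_add_lt {u : WithBot ℝ} {p q : ℝ} (h : u < ((p : ℝ) : WithBot ℝ)) :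
    u + ((q : ℝ) : WithBot ℝ) < (((p + q : ℝ)) : WithBot ℝ) := by
  cases u with
  | bot =>
      rw [WithBot.bot_add]
      exact WithBot.bot_lt_coe _
  | coe r =>
      rw [← WithBot.coe_add, WithBot.coe_lt_coe] at *
      linarith

theorem wb_add_le {u : WithBot ℝ} {p q : ℝ} (h : u ≤ ((p : ℝ) : WithBot ℝ)) :
    u + ((q : ℝ) : WithBot ℝ) ≤ (((p + q : ℝ)) : WithBot ℝ) := by
  cases u with
  | bot => simp
  | coe r =>
      rw [← WithBot.coe_add, WithBot.coe_le_coe] at *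
      linarith

theorem wb_le_cancel {u : WithBot ℝ} {p q : ℝ}
    (h : u + ((q : ℝ) : WithBot ℝ) ≤ (((p + q : ℝ)) : WithBot ℝ)) :
    u ≤ ((p : ℝ) : WithBot ℝ) := by
  cases u with
  | bot => simp
  | coe r =>
      rw [← WithBot.coe_add, WithBot.coe_le_coe] at *
      linarith

theorem N_sum_le {E : Type*} [AddCommGroup E] (N : E → WithBot ℝ) (h0 : N 0 = ⊥)
    (hadd : ∀ x y, N (x + y) ≤ max (N x) (N y)) {ι : Type*} (s : Finset ι) (f : ι → E) :
    N (∑ i ∈ s, f i) ≤ s.sup fun i => N (f i) := by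
  classical
  induction s using Finset.cons_induction with
  | empty => simp [h0]
  | cons a s ha ih =>
      rw [Finset.sum_cons, Finset.sup_cons]
      exact le_trans (hadd _ _) (max_le_max le_rfl ih)

open scoped Classical in
noncomputable def lcoef (m : ℤ) (a : RatFunc k) : k :=
  if a.intDegree = m ∧ a ≠ 0 then
    ((a * (algebraMap (Polynomial k) (RatFunc k) Polynomial.X) ^ (-m)).num.leadingCoeff /
      (a * (algebraMap (Polynomial k) (RatFunc k) Polynomial.X) ^ (-m)).denom.leadingCoeff)
  else 0

theorem lcoef_ne_zero {m : ℤ} {a : RatFunc k} (ha : a ≠ 0) (hd : a.intDegree = m) :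
    lcoef m a ≠ 0 := by
  rw [lcoef, if_pos ⟨hd, ha⟩]
  have hu : a * (algebraMap (Polynomial k) (RatFunc k) Polynomial.X) ^ (-m) ≠ 0 :=
    mul_ne_zero ha (zpow_ne_zero _ tX_ne_zero)
  exact div_ne_zero (Polynomial.leadingCoeff_ne_zero.mpr (RatFunc.num_ne_zero hu))
    (Polynomial.leadingCoeff_ne_zero.mpr (RatFunc.denom_ne_zero _))

theorem extract (m : ℤ) (a : RatFunc k)
    (h : degK a ≤ (((m : ℝ)) : WithBot ℝ)) :
    degK (a - RatFunc.C (lcoef m a) *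
        (algebraMap (Polynomial k) (RatFunc k) Polynomial.X) ^ m)
      < (((m : ℝ)) : WithBot ℝ) := by
  set T := algebraMap (Polynomial k) (RatFunc k) Polynomial.X with hT
  by_cases hcase : a.intDegree = m ∧ a ≠ 0
  · obtain ⟨hd, ha⟩ := hcase
    set u := a * T ^ (-m) with hu'
    have hTm : T ^ (-m) ≠ 0 := zpow_ne_zero _ tX_ne_zero
    have hu : u ≠ 0 := mul_ne_zero ha hTm
    have hud : u.intDegree = 0 := by
      rw [hu', RatFunc.intDegree_mul ha hTm, myIntDegree_zpow _ tX_ne_zero,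
        RatFunc.intDegree_polynomial, Polynomial.natDegree_X, hd]
      ring
    have hc : lcoef m a = u.num.leadingCoeff / u.denom.leadingCoeff := by
      rw [lcoef, if_pos ⟨hd, ha⟩]
    have hfact : a - RatFunc.C (lcoef m a) * T ^ m =
        (u - RatFunc.C (lcoef m a)) * T ^ m := by
      rw [sub_mul, hu', mul_assoc, ← zpow_add₀ tX_ne_zero, neg_add_cancel, zpow_zero, mul_one]
    rw [hfact, hc]
    rcases lead0 hu hud with h0 | hlt
    · rw [h0, zero_mul, degK_zero]
      exact WithBot.bot_lt_coe _
    · have hne : u - RatFunc.C (u.num.leadingCoeff / u.denom.leadingCoeff) ≠ 0 := by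
        intro hzz
        rw [hzz, RatFunc.intDegree_zero] at hlt
        exact absurd hlt (lt_irrefl 0)
      rw [degK_mul, degK_eq hne, degK_tpow, ← WithBot.coe_add, WithBot.coe_lt_coe]
      have : (((u - RatFunc.C (u.num.leadingCoeff / u.denom.leadingCoeff)).intDegree : ℝ)) < 0 := by
        exact_mod_cast hlt
      linarith
  · have hc0 : lcoef m a = 0 := by rw [lcoef, if_neg hcase]
    rw [hc0, map_zero, zero_mul, sub_zero]
    by_cases ha : a = 0
    · rw [ha, degK_zero]; exact WithBot.bot_lt_coe _
    · have hd : a.intDegree ≠ m := fun hd => hcase ⟨hd, ha⟩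
      have hle : a.intDegree ≤ m := by
        rw [degK_eq ha, WithBot.coe_le_coe] at h
        exact_mod_cast h
      rw [degK_eq ha, WithBot.coe_lt_coe]
      have : a.intDegree < m := lt_of_le_of_ne hle hd
      exact_mod_cast this

end aux

/-- (Schmidt's criterion.) Let `b₁,…,b_n` be a basis of `E` whose norms
are all `≡ r mod ℤ`, with `‖b_i‖ = r - m_i`.  Then the basis is reduced iff the images
`red_r (t^{m_i} • b_i)` are `k`-linearly independent in `V_r = E_{≤r}/E_{<r}` (i.e. no
nontrivial `k`-combination of the `t^{m_i} • b_i` has norm `< r`), and in that case they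
form a `k`-basis of `V_r` (every element of `E_{≤r}` is within `E_{<r}` of a
`k`-combination). -/
theorem stmt10 {k : Type*} [Field k] {E : Type*} [AddCommGroup E]
    [Module (RatFunc k) E] [Module (Polynomial k) E] [Module k E]
    [IsScalarTower (Polynomial k) (RatFunc k) E] [IsScalarTower k (RatFunc k) E]
    (N : E → WithBot ℝ)
    (hadd : ∀ x y : E, N (x + y) ≤ max (N x) (N y))
    (hsmul : ∀ (a : RatFunc k) (x : E), N (a • x) = degK a + N x)
    (hzero : ∀ x : E, N x = ⊥ ↔ x = 0)
    (hlat : ∃ s : Finset E, Submodule.span (RatFunc k) (s : Set E) = ⊤ ∧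
      ∀ r : ℝ, ∃ S : Finset E,
        {x : E | x ∈ Submodule.span (Polynomial k) (s : Set E) ∧ N x ≤ (r : ℝ)} ⊆
          (Submodule.span k (S : Set E) : Set E))
    (n : ℕ) (b : Fin n → E)
    (hbasis : LinearIndependent (RatFunc k) b ∧
      Submodule.span (RatFunc k) (Set.range b) = ⊤)
    (rr : ℝ) (m : Fin n → ℤ)
    (hr : ∀ i, N (b i) = ((rr - (m i : ℝ) : ℝ) : WithBot ℝ))
    (t : RatFunc k) (ht : t = (algebraMap (Polynomial k) (RatFunc k)) Polynomial.X) :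
    ((∀ a : Fin n → RatFunc k,
        N (∑ i, a i • b i) = Finset.univ.sup (fun i => degK (a i) + N (b i))) ↔
      (∀ c : Fin n → k,
        N (∑ i, c i • ((t ^ (m i)) • b i)) < ((rr : ℝ) : WithBot ℝ) → ∀ i, c i = 0)) ∧
    ((∀ a : Fin n → RatFunc k,
        N (∑ i, a i • b i) = Finset.univ.sup (fun i => degK (a i) + N (b i))) →
      ∀ x : E, N x ≤ ((rr : ℝ) : WithBot ℝ) →
        ∃ c : Fin n → k,
          N (x - ∑ i, c i • ((t ^ (m i)) • b i)) < ((rr : ℝ) : WithBot ℝ)) := by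
  classical
  obtain ⟨hli, hsp⟩ := hbasis
  subst ht
  set T : RatFunc k := algebraMap (Polynomial k) (RatFunc k) Polynomial.X with hT
  have hTne : T ≠ 0 := tX_ne_zero
  have hN0 : N 0 = ⊥ := (hzero 0).mpr rfl
  have hNneg : ∀ x : E, N (-x) = N x := by
    intro x
    have h1 : (-x) = ((-1 : RatFunc k)) • x := by rw [neg_smul, one_smul]
    have h2 : degK (-1 : RatFunc k) = ((0 : ℝ) : WithBot ℝ) := by
      rw [degK_eq (by norm_num), RatFunc.intDegree_neg, RatFunc.intDegree_one]
      norm_num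
    rw [h1, hsmul, h2]
    cases hN : N x with
    | bot => simp
    | coe r => rw [← WithBot.coe_add]; norm_num
  have hsmulk : ∀ (c : k) (y : RatFunc k) (e : E), c • (y • e) = (RatFunc.C c * y) • e := by
    intro c y e
    rw [← smul_assoc]
    congr 1
    rw [Algebra.smul_def]
    rfl
  have hTnorm : ∀ (z : ℤ) (c : k), c ≠ 0 →
      degK (RatFunc.C c * T ^ z) = (((z : ℝ)) : WithBot ℝ) := by
    intro z c hc
    rw [degK_mul, degK_C hc, hT, degK_tpow, ← WithBot.coe_add]
    norm_num
  constructor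
  · constructor
    · -- reduced → independent
      intro hred c hc i
      by_contra hci
      have hsum : ∑ i, c i • (T ^ (m i) • b i)
          = ∑ i, (RatFunc.C (c i) * T ^ (m i)) • b i :=
        Finset.sum_congr rfl fun i _ => hsmulk _ _ _
      rw [hsum, hred (fun i => RatFunc.C (c i) * T ^ (m i))] at hc
      have hle : ((rr : ℝ) : WithBot ℝ) ≤
          Finset.univ.sup (fun j => degK (RatFunc.C (c j) * T ^ (m j)) + N (b j)) := by
        refine le_trans ?_ (Finset.le_sup (Finset.mem_univ i))
        rw [hTnorm (m i) (c i) hci, hr i, ← WithBot.coe_add, WithBot.coe_le_coe]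
        linarith
      exact absurd hc (not_lt.mpr hle)
    · -- independent → reduced
      intro hind a
      by_cases hall : ∀ i, a i = 0
      · have h1 : (∑ i, a i • b i) = 0 := by simp [hall]
        have h2 : Finset.univ.sup (fun i => degK (a i) + N (b i)) = ⊥ := by
          refine le_antisymm (Finset.sup_le fun i _ => ?_) bot_le
          rw [hall i, degK_zero, WithBot.bot_add]
        rw [h1, hN0, h2]
      · push_neg at hall
        set S : Finset (Fin n) := Finset.univ.filter (fun i => a i ≠ 0) with hS
        have hSne : S.Nonempty := by
          obtain ⟨i, hi⟩ := hall
          exact ⟨i, by simp [hS, hi]⟩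
        set s : ℤ := S.sup' hSne (fun i => (a i).intDegree - m i) with hs
        obtain ⟨j, hjS, hj⟩ := Finset.exists_mem_eq_sup' hSne (fun i => (a i).intDegree - m i)
        have hjne : a j ≠ 0 := by simpa [hS] using hjS
        have hsj : s = (a j).intDegree - m j := hj
        set a' : Fin n → RatFunc k := fun i => T ^ (-s) * a i with ha'
        have ha'ne : ∀ i, a i ≠ 0 → a' i ≠ 0 := fun i hi =>
          mul_ne_zero (zpow_ne_zero _ hTne) hi
        have ha'deg : ∀ i, a i ≠ 0 → (a' i).intDegree = (a i).intDegree - s := by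
          intro i hi
          rw [ha']
          rw [RatFunc.intDegree_mul (zpow_ne_zero _ hTne) hi, hT,
            myIntDegree_zpow _ tX_ne_zero, RatFunc.intDegree_polynomial,
            Polynomial.natDegree_X]
          push_cast
          ring
        have hsup_ge : ∀ i, a i ≠ 0 → (a i).intDegree - m i ≤ s := by
          intro i hi
          have hiS : i ∈ S := by rw [hS]; simp [hi]
          rw [hs]
          exact Finset.le_sup' (fun i => (a i).intDegree - m i) hiS
        have hdegK_a' : ∀ i, degK (a' i) ≤ ((((m i : ℝ))) : WithBot ℝ) := by
          intro i
          by_cases hi : a i = 0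
          · have : a' i = 0 := by rw [ha']; simp [hi]
            rw [this, degK_zero]
            exact bot_le
          · rw [degK_eq (ha'ne i hi), WithBot.coe_le_coe]
            have := hsup_ge i hi
            have h3 : (a' i).intDegree ≤ m i := by rw [ha'deg i hi]; omega
            exact_mod_cast h3
        set c : Fin n → k := fun i => lcoef (m i) (a' i) with hcdef
        set d : Fin n → RatFunc k := fun i => a' i - RatFunc.C (c i) * T ^ (m i) with hd
        have hdlt : ∀ i, degK (d i) < ((((m i : ℝ))) : WithBot ℝ) := by
          intro i
          rw [hd, hcdef, hT]
          exact extract (m i) (a' i) (hdegK_a' i)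
        have hcj : c j ≠ 0 := by
          rw [hcdef]
          refine lcoef_ne_zero (ha'ne j hjne) ?_
          rw [ha'deg j hjne]
          omega
        have hsplit : ∑ i, c i • (T ^ (m i) • b i)
            = (∑ i, a' i • b i) - ∑ i, d i • b i := by
          rw [← Finset.sum_sub_distrib]
          refine Finset.sum_congr rfl fun i _ => ?_
          rw [hsmulk, ← sub_smul]
          congr 1
          rw [hd]
          ring
        have hNd : N (∑ i, d i • b i) < ((rr : ℝ) : WithBot ℝ) := by
          refine lt_of_le_of_lt (N_sum_le N hN0 hadd _ _) ?_
          rw [Finset.sup_lt_iff (WithBot.bot_lt_coe rr)]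
          intro i _
          rw [hsmul, hr i]
          have h4 := wb_add_lt (q := rr - (m i : ℝ)) (hdlt i)
          rwa [show ((m i : ℝ) + (rr - (m i : ℝ)) : ℝ) = rr from by ring] at h4
        have hNc : ((rr : ℝ) : WithBot ℝ) ≤ N (∑ i, c i • (T ^ (m i) • b i)) := by
          by_contra hlt
          push_neg at hlt
          exact hcj (hind c hlt j)
        have hNa'le : N (∑ i, a' i • b i) ≤ ((rr : ℝ) : WithBot ℝ) := by
          refine le_trans (N_sum_le N hN0 hadd _ _) (Finset.sup_le fun i _ => ?_)
          rw [hsmul, hr i]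
          have h4 := wb_add_le (q := rr - (m i : ℝ)) (hdegK_a' i)
          rwa [show ((m i : ℝ) + (rr - (m i : ℝ)) : ℝ) = rr from by ring] at h4
        have hNa'ge : ((rr : ℝ) : WithBot ℝ) ≤ N (∑ i, a' i • b i) := by
          have h1 : N (∑ i, c i • (T ^ (m i) • b i)) ≤
              max (N (∑ i, a' i • b i)) (N (∑ i, d i • b i)) := by
            rw [hsplit, sub_eq_add_neg]
            refine le_trans (hadd _ _) ?_
            rw [hNneg]
          rcases le_or_gt ((rr : ℝ) : WithBot ℝ) (N (∑ i, a' i • b i)) with h | h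
          · exact h
          · exact absurd hNc (not_le.mpr (lt_of_le_of_lt h1 (max_lt h hNd)))
        have hNa' : N (∑ i, a' i • b i) = ((rr : ℝ) : WithBot ℝ) :=
          le_antisymm hNa'le hNa'ge
        have hsum_a : ∑ i, a i • b i = (T ^ s) • ∑ i, a' i • b i := by
          rw [Finset.smul_sum]
          refine Finset.sum_congr rfl fun i _ => ?_
          rw [smul_smul, ha', ← mul_assoc, ← zpow_add₀ hTne, add_neg_cancel, zpow_zero,
            one_mul]
        have hNa : N (∑ i, a i • b i) = (((s : ℝ) + rr : ℝ) : WithBot ℝ) := by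
          rw [hsum_a, hsmul, hT, degK_tpow, hNa', ← WithBot.coe_add]
        rw [hNa]
        refine (le_antisymm (Finset.sup_le fun i _ => ?_) ?_).symm
        · by_cases hi : a i = 0
          · rw [hi, degK_zero, WithBot.bot_add]
            exact bot_le
          · rw [degK_eq hi, hr i, ← WithBot.coe_add, WithBot.coe_le_coe]
            have h5 := hsup_ge i hi
            have h6 : ((a i).intDegree : ℝ) - (m i : ℝ) ≤ (s : ℝ) := by exact_mod_cast h5
            linarith
        · refine le_trans ?_ (Finset.le_sup (Finset.mem_univ j))
          rw [degK_eq hjne, hr j, ← WithBot.coe_add, WithBot.coe_le_coe]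
          have h6 : ((a j).intDegree : ℝ) - (m j : ℝ) = (s : ℝ) := by
            exact_mod_cast hsj.symm
          linarith
  · -- reduced → spanning
    intro hred x hx
    set B : Module.Basis (Fin n) (RatFunc k) E := Module.Basis.mk hli (by rw [hsp]) with hB
    set a : Fin n → RatFunc k := fun i => B.repr x i with ha
    have hxsum : ∑ i, a i • b i = x := by
      have h1 := B.sum_repr x
      simpa [ha, hB, Module.Basis.mk_apply] using h1
    have hterm : ∀ i, degK (a i) ≤ ((((m i : ℝ))) : WithBot ℝ) := by
      intro i
      have h1 : degK (a i) + N (b i) ≤ ((rr : ℝ) : WithBot ℝ) := by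
        calc degK (a i) + N (b i)
            ≤ Finset.univ.sup (fun i => degK (a i) + N (b i)) :=
              Finset.le_sup (f := fun i => degK (a i) + N (b i)) (Finset.mem_univ i)
          _ = N (∑ i, a i • b i) := (hred a).symm
          _ = N x := by rw [hxsum]
          _ ≤ _ := hx
      rw [hr i] at h1
      refine wb_le_cancel (p := (m i : ℝ)) (q := rr - (m i : ℝ)) ?_
      rwa [show ((m i : ℝ) + (rr - (m i : ℝ)) : ℝ) = rr from by ring]
    refine ⟨fun i => lcoef (m i) (a i), ?_⟩
    have hsub : x - ∑ i, lcoef (m i) (a i) • (T ^ (m i) • b i)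
        = ∑ i, (a i - RatFunc.C (lcoef (m i) (a i)) * T ^ (m i)) • b i := by
      rw [← hxsum, ← Finset.sum_sub_distrib]
      exact Finset.sum_congr rfl fun i _ => by rw [hsmulk, ← sub_smul]
    rw [hsub]
    refine lt_of_le_of_lt (N_sum_le N hN0 hadd _ _) ?_
    rw [Finset.sup_lt_iff (WithBot.bot_lt_coe rr)]
    intro i _
    rw [hsmul, hr i]
    have h5 : degK (a i - RatFunc.C (lcoef (m i) (a i)) * T ^ (m i))
        < ((((m i : ℝ))) : WithBot ℝ) := by
      rw [hT]
      exact extract (m i) (a i) (hterm i)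
    have h4 := wb_add_lt (q := rr - (m i : ℝ)) h5
    rwa [show ((m i : ℝ) + (rr - (m i : ℝ)) : ℝ) = rr from by ring] at h4
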